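/- arXiv:2311.06017 — 4 statements merged into one kernel-verified Lean document; each statement's English description precedes it below -/
import Mathlib

section
/- Let A ∈ ℤ^{m×n} with rank(A) = n, and let b ∈ ℤ^m lie in the real column span of A. Let U ∈ ℤ^{n×m} and R ∈ ℤ^{(m−n)×m} be such that the stacked m×m matrix [U; R] has determinant ±1 and [U; R]·A = [I_n; 0]. Then Q(A,b) = conv{ y ∈ ℤ^m : y ≥ 0, R y = 0 } = { y ∈ ℝ^m : y ≥ 0, R y = 0 }. -/
open Matrix


lemma rat_decomp {r : Type*} [Fintype r] [DecidableEq r] {m : ℕ} (M : Matrix r (Fin m) ℚ) (x : Fin m → ℚ) :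
    ∃ u c, M.mulVec u = 0 ∧ x = u + Mᵀ.mulVec c := by
  have hle : LinearMap.range (M * Mᵀ).mulVecLin ≤ LinearMap.range M.mulVecLin := by
    rintro _ ⟨c, rfl⟩
    exact ⟨Mᵀ.mulVec c, by simp [Matrix.mulVecLin_apply, Matrix.mulVec_mulVec, Matrix.mulVec_transpose]⟩
  have hr : LinearMap.range (M * Mᵀ).mulVecLin = LinearMap.range M.mulVecLin := by
    apply Submodule.eq_of_le_of_finrank_le hle
    have h1 := Matrix.rank_self_mul_transpose M
    unfold Matrix.rank at h1
    omega
  obtain ⟨c, hc⟩ : M.mulVec x ∈ LinearMap.range (M * Mᵀ).mulVecLin := by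
    rw [hr]; exact ⟨x, rfl⟩
  refine ⟨x - Mᵀ.mulVec c, c, ?_, by abel⟩
  have : (M * Mᵀ).mulVec c = M.mulVec x := hc
  rw [Matrix.mulVec_sub, Matrix.mulVec_mulVec, this, sub_self]

lemma cast_mulVec {r c : Type*} [Fintype c] (M : Matrix r c ℚ) (v : c → ℚ) :
    (M.map (Rat.cast : ℚ → ℝ)).mulVec (fun i => (v i : ℝ)) = fun i => ((M.mulVec v i : ℚ) : ℝ) := by
  funext i
  exact (RingHom.map_mulVec (Rat.castHom ℝ) M v i).symm

lemma span_rat_ker {r : Type*} [Fintype r] [DecidableEq r] {m : ℕ} (M : Matrix r (Fin m) ℚ) (y : Fin m → ℝ)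
    (hy : (M.map (Rat.cast : ℚ → ℝ)).mulVec y = 0) :
    y ∈ Submodule.span ℝ
      {z : Fin m → ℝ | ∃ q : Fin m → ℚ, M.mulVec q = 0 ∧ z = fun i => (q i : ℝ)} := by
  set Mr := M.map (Rat.cast : ℚ → ℝ) with hMr
  set S : Set (Fin m → ℝ) :=
    {z : Fin m → ℝ | ∃ q : Fin m → ℚ, M.mulVec q = 0 ∧ z = fun i => (q i : ℝ)} with hS
  set K := Submodule.span ℝ S with hK
  set P := LinearMap.range Mrᵀ.mulVecLin with hP
  have htop : K ⊔ P = ⊤ := by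
    rw [eq_top_iff]
    intro x _
    rw [pi_eq_sum_univ x]
    apply Submodule.sum_mem
    intro j _
    apply Submodule.smul_mem
    obtain ⟨u, c, hu, he⟩ := rat_decomp M (fun i => if j = i then (1 : ℚ) else 0)
    have hcast : (fun t => if j = t then (1 : ℝ) else 0)
        = (fun i => ((u i : ℝ))) + Mrᵀ.mulVec (fun i => (c i : ℝ)) := by
      have h2 : Mrᵀ = Mᵀ.map (Rat.cast : ℚ → ℝ) := by
        ext i t; simp [Matrix.map_apply, Matrix.transpose_apply, hMr]
      rw [h2, cast_mulVec]
      funext t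
      have := congrFun he t
      simp only [Pi.add_apply] at this ⊢
      rw [show ((if j = t then (1:ℝ) else 0)) = (((if j = t then (1:ℚ) else 0) : ℚ) : ℝ) by
        split <;> simp]
      rw [this]
      push_cast
      ring
    rw [hcast]
    exact Submodule.add_mem _
      (Submodule.mem_sup_left (Submodule.subset_span ⟨u, hu, rfl⟩))
      (Submodule.mem_sup_right ⟨_, rfl⟩)
  have hyK : y ∈ K ⊔ P := htop ▸ Submodule.mem_top
  rw [Submodule.mem_sup] at hyK
  obtain ⟨u, hu, p, hp, hup⟩ := hyK
  have hKker : K ≤ LinearMap.ker Mr.mulVecLin := by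
    rw [Submodule.span_le]
    rintro z ⟨q, hq, rfl⟩
    simp only [SetLike.mem_coe, LinearMap.mem_ker, Matrix.mulVecLin_apply]
    rw [cast_mulVec, hq]
    funext i; simp
  have hMu : Mr.mulVec u = 0 := hKker hu
  have hMp : Mr.mulVec p = 0 := by
    have : Mr.mulVec y = Mr.mulVec u + Mr.mulVec p := by
      rw [← Matrix.mulVec_add, hup]
    rw [hy, hMu, zero_add] at this
    exact this.symm
  obtain ⟨c, hc⟩ := hp
  have hp0 : p = 0 := by
    rw [← dotProduct_self_eq_zero (v := p)]
    have : p = Mrᵀ.mulVec c := hc.symm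
    calc p ⬝ᵥ p = (c ᵥ* Mr) ⬝ᵥ p := by rw [this, Matrix.mulVec_transpose]
    _ = c ⬝ᵥ (Mr *ᵥ p) := by rw [← Matrix.dotProduct_mulVec]
    _ = 0 := by rw [hMp, dotProduct_zero]
  rw [← hup, hp0, add_zero]
  exact hu


lemma rat_mul_nat_int (q : ℚ) (N : ℕ) (h : q.den ∣ N) : ∃ z : ℤ, q * (N : ℚ) = (z : ℚ) := by
  obtain ⟨t, ht⟩ := h
  refine ⟨q.num * t, ?_⟩
  rw [ht]
  push_cast
  rw [← mul_assoc, Rat.mul_den_eq_num]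

lemma rat_in_hull {k m : ℕ} (R : Matrix (Fin k) (Fin m) ℤ) (w : Fin m → ℚ)
    (hw0 : 0 ≤ w) (hwR : (R.map (Int.cast : ℤ → ℚ)).mulVec w = 0) :
    (fun i => ((w i : ℚ) : ℝ)) ∈ convexHull ℝ
      {z : Fin m → ℝ | ∃ v : Fin m → ℤ, 0 ≤ v ∧ R.mulVec v = 0 ∧ z = fun i => ((v i : ℤ) : ℝ)} := by
  set D := {z : Fin m → ℝ | ∃ v : Fin m → ℤ, 0 ≤ v ∧ R.mulVec v = 0 ∧ z = fun i => ((v i : ℤ) : ℝ)}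
    with hD
  set N : ℕ := ∏ i, (w i).den with hN
  have hNpos : 0 < N := Finset.prod_pos (fun i _ => (w i).pos)
  have hvex : ∀ i : Fin m, ∃ z : ℤ, w i * (N : ℚ) = (z : ℚ) := by
    intro i
    exact rat_mul_nat_int _ _ (Finset.dvd_prod_of_mem _ (Finset.mem_univ i))
  choose v hv using hvex
  have hv0 : 0 ≤ v := by
    intro i
    have : (0 : ℚ) ≤ (v i : ℚ) := by
      rw [← hv i]
      exact mul_nonneg (hw0 i) (by positivity)
    exact_mod_cast this
  have hvR : R.mulVec v = 0 := by
    have h1 : (R.map (Int.cast : ℤ → ℚ)).mulVec (fun i => (v i : ℚ)) = 0 := by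
      have : (fun i => (v i : ℚ)) = (N : ℚ) • w := by
        funext i; rw [← hv i]; simp [mul_comm]
      rw [this, Matrix.mulVec_smul, hwR, smul_zero]
    funext j
    have := congrFun h1 j
    have h2 : ((R.mulVec v j : ℤ) : ℚ) = 0 := by
      have h3 : ((R *ᵥ v) j : ℚ) = (R.map (Int.cast : ℤ → ℚ) *ᵥ fun i => ((v i : ℚ))) j :=
        RingHom.map_mulVec (Int.castRingHom ℚ) R v j
      rw [h3, this]
      simp
    exact_mod_cast h2
  have h0D : (0 : Fin m → ℝ) ∈ D := ⟨0, le_refl _, by simp [Matrix.mulVec_zero], by funext i; simp⟩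
  have hvD : (fun i => ((v i : ℤ) : ℝ)) ∈ D := ⟨v, hv0, hvR, rfl⟩
  have hcombo : (fun i => ((w i : ℚ) : ℝ))
      = (1 - (N : ℝ)⁻¹) • (0 : Fin m → ℝ) + (N : ℝ)⁻¹ • (fun i => ((v i : ℤ) : ℝ)) := by
    funext i
    have : ((v i : ℚ) : ℝ) = (w i : ℝ) * (N : ℝ) := by
      rw [← hv i]; push_cast; ring
    simp only [Pi.add_apply, Pi.smul_apply, smul_eq_mul, Pi.zero_apply, mul_zero, zero_add]
    have hN0 : (N : ℝ) ≠ 0 := by positivity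
    rw [show ((v i : ℤ) : ℝ) = ((v i : ℚ) : ℝ) by push_cast; ring, this]
    field_simp
  rw [hcombo]
  exact (convex_convexHull ℝ D) (subset_convexHull ℝ D h0D) (subset_convexHull ℝ D hvD)
    (by simp; rw [inv_le_one_iff₀]; right; exact_mod_cast hNpos) (by positivity)
    (by ring)

lemma key {k m : ℕ} (R : Matrix (Fin k) (Fin m) ℤ) (y : Fin m → ℝ)
    (hy0 : 0 ≤ y) (hyR : (R.map (Int.cast : ℤ → ℝ)).mulVec y = 0) :
    y ∈ convexHull ℝ
      {z : Fin m → ℝ | ∃ v : Fin m → ℤ, 0 ≤ v ∧ R.mulVec v = 0 ∧ z = fun i => ((v i : ℤ) : ℝ)} := by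
  classical
  set D := {z : Fin m → ℝ | ∃ v : Fin m → ℤ, 0 ≤ v ∧ R.mulVec v = 0 ∧ z = fun i => ((v i : ℤ) : ℝ)}
    with hD
  -- the matrix encoding the subspace W = {z | Rz = 0, z_i = 0 for y i = 0}
  set M' : Matrix (Fin k ⊕ Fin m) (Fin m) ℚ :=
    Matrix.fromRows (R.map (Int.cast : ℤ → ℚ))
      (Matrix.of fun i j => if y i = 0 ∧ i = j then 1 else 0) with hM'
  have hbot : ∀ (q : Fin m → ℚ) (i : Fin m),
      ((Matrix.of fun i j => if y i = 0 ∧ i = j then (1:ℚ) else 0).mulVec q) i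
        = if y i = 0 then q i else 0 := by
    intro q i
    simp only [Matrix.mulVec, dotProduct, Matrix.of_apply]
    rw [Finset.sum_eq_single i]
    · by_cases h : y i = 0 <;> simp [h]
    · intro j _ hj; simp [Ne.symm hj]
    · simp
  have hker : ∀ q : Fin m → ℚ, M'.mulVec q = 0 →
      ((R.map (Int.cast : ℤ → ℚ)).mulVec q = 0 ∧ ∀ i, y i = 0 → q i = 0) := by
    intro q hq
    rw [hM', Matrix.fromRows_mulVec] at hq
    constructor
    · funext j; exact congrFun hq (Sum.inl j)
    · intro i hi
      have := congrFun hq (Sum.inr i)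
      simp only [Sum.elim_inr, Pi.zero_apply] at this
      rw [hbot q i, if_pos hi] at this
      exact this
  have hyM : (M'.map (Rat.cast : ℚ → ℝ)).mulVec y = 0 := by
    have hmap : M'.map (Rat.cast : ℚ → ℝ) =
        Matrix.fromRows (R.map (Int.cast : ℤ → ℝ))
          (Matrix.of fun i j => if y i = 0 ∧ i = j then (1:ℝ) else 0) := by
      ext i j
      cases i with
      | inl i => simp [hM', Matrix.fromRows_apply_inl, Matrix.map_apply]
      | inr i =>
        simp only [hM', Matrix.fromRows_apply_inr, Matrix.map_apply, Matrix.of_apply, Sum.elim_inr]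
        split <;> simp
    rw [hmap, Matrix.fromRows_mulVec]
    funext s
    cases s with
    | inl j => simpa using congrFun hyR j
    | inr i =>
      have : ((Matrix.of fun i j => if y i = 0 ∧ i = j then (1:ℝ) else 0).mulVec y) i
          = if y i = 0 then y i else 0 := by
        simp only [Matrix.mulVec, dotProduct, Matrix.of_apply]
        rw [Finset.sum_eq_single i]
        · by_cases h : y i = 0 <;> simp [h]
        · intro j _ hj; simp [Ne.symm hj]
        · simp
      simp only [Sum.elim_inr, Pi.zero_apply, this]
      by_cases h : y i = 0 <;> simp [h]
  -- y is a real combination of rational kernel elements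
  have hspan := span_rat_ker M' y hyM
  rw [Submodule.mem_span_set] at hspan
  obtain ⟨c, hsupp, hsum⟩ := hspan
  set ι := {z : Fin m → ℝ // z ∈ c.support} with hι
  -- choose rational preimages
  have hch : ∀ z : ι, ∃ q : Fin m → ℚ, M'.mulVec q = 0 ∧ (z : Fin m → ℝ) = fun i => (q i : ℝ) := by
    intro z; exact hsupp z.2
  choose q hq1 hq2 using hch
  -- ε
  obtain ⟨ε, hεpos, hεle⟩ : ∃ ε : ℝ, 0 < ε ∧ ∀ i, y i ≠ 0 → ε ≤ y i := by
    by_cases hne : (Finset.univ.filter (fun i => y i ≠ 0)).Nonempty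
    · refine ⟨(Finset.univ.filter (fun i => y i ≠ 0)).inf' hne y, ?_, ?_⟩
      · rw [Finset.lt_inf'_iff]
        intro i hi
        simp only [Finset.mem_filter] at hi
        exact lt_of_le_of_ne (hy0 i) (Ne.symm hi.2)
      · intro i hi
        exact Finset.inf'_le y (by simp [hi])
    · refine ⟨1, one_pos, fun i hi => ?_⟩
      exact absurd ⟨i, by simp [hi]⟩ hne
  -- bound B and δ
  set B : ℝ := 1 + ∑ z : ι, ∑ i, |(z : Fin m → ℝ) i| with hB
  have hBpos : 0 < B := by
    have : (0:ℝ) ≤ ∑ z : ι, ∑ i, |(z : Fin m → ℝ) i| :=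
      Finset.sum_nonneg fun z _ => Finset.sum_nonneg fun i _ => abs_nonneg _
    linarith
  set δ : ℝ := ε / B with hδ
  have hδpos : 0 < δ := div_pos hεpos hBpos
  -- rationals around the coefficients
  have hab : ∀ z : ι, ∃ a b : ℚ, (a:ℝ) ≤ c (z:Fin m → ℝ) ∧ (c (z:Fin m → ℝ) : ℝ) ≤ b ∧
      c (z:Fin m → ℝ) - δ < a ∧ (b:ℝ) < c (z:Fin m → ℝ) + δ := by
    intro z
    obtain ⟨a, ha1, ha2⟩ := exists_rat_btwn (sub_lt_self (c (z:Fin m → ℝ)) hδpos)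
    obtain ⟨b, hb1, hb2⟩ := exists_rat_btwn (lt_add_of_pos_right (c (z:Fin m → ℝ)) hδpos)
    exact ⟨a, b, le_of_lt ha2, le_of_lt hb1, ha1, hb2⟩
  choose a b ha hb ha' hb' using hab
  -- the linear map Φ
  set Φ : (ι → ℝ) →ₗ[ℝ] (Fin m → ℝ) :=
    { toFun := fun d => ∑ z : ι, d z • (z : Fin m → ℝ)
      map_add' := by
        intro d₁ d₂
        simp only [Pi.add_apply, add_smul]
        rw [Finset.sum_add_distrib]
      map_smul' := by
        intro r d
        simp only [Pi.smul_apply, smul_eq_mul, RingHom.id_apply]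
        rw [Finset.smul_sum]
        congr 1
        funext z
        rw [smul_smul] } with hΦ
  have hyΦ : y = Φ (fun z => c (z : Fin m → ℝ)) := by
    rw [← hsum, Finsupp.sum, hΦ]
    simp only [LinearMap.coe_mk, AddHom.coe_mk]
    rw [← Finset.sum_attach c.support (fun z => c z • z)]
    rfl
  -- the box
  set t : ι → Set ℝ := fun z => {(a z : ℝ), (b z : ℝ)} with ht
  have hcbox : (fun z : ι => c (z : Fin m → ℝ)) ∈ convexHull ℝ (Set.univ.pi t) := by
    apply mem_convexHull_pi
    intro z _
    rw [ht]
    simp only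
    rw [convexHull_pair, segment_eq_Icc (le_trans (ha z) (hb z))]
    exact ⟨ha z, hb z⟩
  have himg : y ∈ convexHull ℝ (Φ '' (Set.univ.pi t)) := by
    rw [← Φ.image_convexHull]
    exact ⟨_, hcbox, hyΦ.symm⟩
  -- every image point is in convexHull D
  refine convexHull_min ?_ (convex_convexHull ℝ D) himg
  rintro _ ⟨d, hd, rfl⟩
  -- d z ∈ {a z, b z}
  have hdz : ∀ z : ι, ∃ dq : ℚ, d z = (dq : ℝ) ∧ |d z - c (z:Fin m → ℝ)| < δ := by
    intro z
    have := hd z (Set.mem_univ z)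
    rw [ht] at this
    simp only [Set.mem_insert_iff, Set.mem_singleton_iff] at this
    rcases this with h | h
    · refine ⟨a z, h, ?_⟩
      rw [h, abs_lt]
      constructor
      · linarith [ha' z]
      · linarith [ha z, hδpos]
    · refine ⟨b z, h, ?_⟩
      rw [h, abs_lt]
      constructor
      · linarith [hb z, hδpos]
      · linarith [hb' z]
  choose dq hdq1 hdq2 using hdz
  -- the rational vector
  set w : Fin m → ℚ := fun i => ∑ z : ι, dq z * q z i with hw
  have hΦd : Φ d = fun i => ((w i : ℚ) : ℝ) := by
    funext i
    rw [hΦ]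
    simp only [LinearMap.coe_mk, AddHom.coe_mk, Finset.sum_apply, Pi.smul_apply, smul_eq_mul, hw]
    push_cast
    congr 1
    funext z
    rw [hdq1 z, congrFun (hq2 z) i]
  -- coordinate estimate
  have hest : ∀ i, |Φ d i - y i| ≤ δ * (∑ z : ι, |(z : Fin m → ℝ) i|) := by
    intro i
    rw [hyΦ, hΦ]
    simp only [LinearMap.coe_mk, AddHom.coe_mk, Finset.sum_apply, Pi.smul_apply, smul_eq_mul]
    rw [← Finset.sum_sub_distrib]
    refine le_trans (Finset.abs_sum_le_sum_abs _ _) ?_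
    rw [Finset.mul_sum]
    apply Finset.sum_le_sum
    intro z _
    rw [← sub_mul, abs_mul]
    exact mul_le_mul_of_nonneg_right (le_of_lt (hdq2 z)) (abs_nonneg _)
  have hsum_le : ∀ i, (∑ z : ι, |(z : Fin m → ℝ) i|) ≤ B - 1 := by
    intro i
    rw [hB]
    simp only [add_sub_cancel_left]
    apply Finset.sum_le_sum
    intro z _
    exact Finset.single_le_sum (f := fun j => |(z : Fin m → ℝ) j|)
      (fun j _ => abs_nonneg _) (Finset.mem_univ i)
  have hest' : ∀ i, |Φ d i - y i| < ε := by
    intro i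
    refine lt_of_le_of_lt (le_trans (hest i)
      (mul_le_mul_of_nonneg_left (hsum_le i) (le_of_lt hδpos))) ?_
    rw [hδ]
    have : ε / B * (B - 1) < ε / B * B := by
      apply mul_lt_mul_of_pos_left (by linarith) hδpos
    rw [div_mul_cancel₀ _ (ne_of_gt hBpos)] at this
    exact this
  -- w is nonnegative
  have hw0 : 0 ≤ w := by
    intro i
    simp only [Pi.zero_apply]
    by_cases hyi : y i = 0
    · have : w i = 0 := by
        rw [hw]
        apply Finset.sum_eq_zero
        intro z _
        rw [(hker (q z) (hq1 z)).2 i hyi, mul_zero]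
      rw [this]
    · have h1 : ε ≤ y i := hεle i hyi
      have h2 := hest' i
      rw [congrFun hΦd i] at h2
      have : (0:ℝ) < (w i : ℝ) := by
        rw [abs_lt] at h2
        linarith
      exact_mod_cast le_of_lt this
  -- R w = 0
  have hwR : (R.map (Int.cast : ℤ → ℚ)).mulVec w = 0 := by
    have : ∀ z : ι, (R.map (Int.cast : ℤ → ℚ)).mulVec (q z) = 0 :=
      fun z => (hker (q z) (hq1 z)).1
    funext j
    have h4 : ∀ z : ι, ∑ x, (R.map (Int.cast : ℤ → ℚ)) j x * q z x = 0 := by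
      intro z
      have h5 := congrFun (this z) j
      simpa [Matrix.mulVec, dotProduct] using h5
    rw [hw]
    simp only [Matrix.mulVec, dotProduct, Pi.zero_apply]
    simp_rw [Finset.mul_sum]
    rw [Finset.sum_comm]
    apply Finset.sum_eq_zero
    intro z _
    simp_rw [mul_left_comm]
    rw [← Finset.mul_sum, h4 z, mul_zero]
  rw [hΦd]
  exact rat_in_hull R w hw0 hwR


lemma slack_eq {m n k : ℕ} (hm : m = n + k)
    (A : Matrix (Fin m) (Fin n) ℤ) (b : Fin m → ℤ)
    (hb : ∃ x : Fin n → ℝ, (A.map (Int.cast : ℤ → ℝ)).mulVec x = fun i => (b i : ℝ))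
    (U : Matrix (Fin n) (Fin m) ℤ) (R : Matrix (Fin k) (Fin m) ℤ)
    (hdet :
      ((Matrix.fromRows U R).submatrix id
          (((finCongr hm).trans finSumFinEquiv.symm).symm : Fin n ⊕ Fin k → Fin m)).det = 1 ∨
      ((Matrix.fromRows U R).submatrix id
          (((finCongr hm).trans finSumFinEquiv.symm).symm : Fin n ⊕ Fin k → Fin m)).det = -1)
    (hmul : Matrix.fromRows U R * A =
      Matrix.fromRows (1 : Matrix (Fin n) (Fin n) ℤ) (0 : Matrix (Fin k) (Fin n) ℤ)) :
    {y : Fin m → ℝ | ∃ x : Fin n → ℤ, 0 ≤ b - A.mulVec x ∧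
        y = fun i => (((b - A.mulVec x) i : ℤ) : ℝ)}
      = {y : Fin m → ℝ | ∃ yz : Fin m → ℤ, 0 ≤ yz ∧ R.mulVec yz = 0 ∧
        y = fun i => ((yz i : ℤ) : ℝ)} := by
  have hRA : R * A = 0 := by
    rw [Matrix.fromRows_mul] at hmul
    ext i j
    simpa [Matrix.fromRows_apply_inr] using congrFun (congrFun hmul (Sum.inr i)) j
  have hRb : R.mulVec b = 0 := by
    obtain ⟨x, hx⟩ := hb
    have h1 : (R.map (Int.cast : ℤ → ℝ)).mulVec (fun i => (b i : ℝ)) = 0 := by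
      have h0 : R.map (Int.cast : ℤ → ℝ) * A.map (Int.cast : ℤ → ℝ) = 0 := by
        have h0' := Matrix.map_mul (L := R) (M := A) (f := Int.castRingHom ℝ)
        rw [hRA] at h0'
        simpa using h0'.symm
      rw [← hx, Matrix.mulVec_mulVec, h0, Matrix.zero_mulVec]
    funext j
    have h2 : ((R.mulVec b j : ℤ) : ℝ) = 0 := by
      have h3 : ((R.mulVec b j : ℤ) : ℝ)
          = ((R.map (Int.cast : ℤ → ℝ)).mulVec (fun i => (b i : ℝ))) j :=
        RingHom.map_mulVec (Int.castRingHom ℝ) R b j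
      rw [h3, h1]; rfl
    exact_mod_cast h2
  -- injectivity of mulVec by the stacked matrix
  set e : Fin n ⊕ Fin k ≃ Fin m := ((finCongr hm).trans finSumFinEquiv.symm).symm with he
  set B := (Matrix.fromRows U R).submatrix id (e : Fin n ⊕ Fin k → Fin m) with hB
  have hBdet : IsUnit B.det := by rcases hdet with h | h <;> simp [h]
  have hBinj : Function.Injective B.mulVec := by
    intro v w h
    have h2 := congrArg (fun u => B⁻¹.mulVec u) h
    simpa [Matrix.mulVec_mulVec, Matrix.nonsing_inv_mul B hBdet, Matrix.one_mulVec] using h2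
  have hMinj : ∀ v w : Fin m → ℤ,
      (Matrix.fromRows U R).mulVec v = (Matrix.fromRows U R).mulVec w → v = w := by
    intro v w h
    have hrel : ∀ u : Fin m → ℤ, B.mulVec (u ∘ e) = (Matrix.fromRows U R).mulVec u := by
      intro u
      rw [hB, Matrix.submatrix_mulVec_equiv]
      have : (u ∘ ⇑e) ∘ ⇑e.symm = u := by
        funext i; simp
      rw [this]
      rfl
    have h3 : B.mulVec (v ∘ e) = B.mulVec (w ∘ e) := by rw [hrel, hrel, h]
    have h4 := hBinj h3
    funext i
    have := congrFun h4 (e.symm i)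
    simpa using this
  have hL2 : ∀ w : Fin m → ℤ, R.mulVec w = 0 → A.mulVec (U.mulVec w) = w := by
    intro w hw
    apply hMinj
    rw [Matrix.mulVec_mulVec, hmul, Matrix.fromRows_mulVec, Matrix.fromRows_mulVec,
      Matrix.one_mulVec, Matrix.zero_mulVec, hw]
  apply Set.eq_of_subset_of_subset
  · rintro y ⟨x, hx0, rfl⟩
    refine ⟨b - A.mulVec x, hx0, ?_, rfl⟩
    rw [Matrix.mulVec_sub, hRb, Matrix.mulVec_mulVec, hRA, Matrix.zero_mulVec, sub_zero]
  · rintro y ⟨v, hv0, hvR, rfl⟩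
    refine ⟨U.mulVec (b - v), ?_, ?_⟩
    · have hbv : R.mulVec (b - v) = 0 := by
        rw [Matrix.mulVec_sub, hRb, hvR, sub_zero]
      have := hL2 (b - v) hbv
      rw [this]
      intro i; simpa using hv0 i
    · have hbv : R.mulVec (b - v) = 0 := by
        rw [Matrix.mulVec_sub, hRb, hvR, sub_zero]
      rw [hL2 (b - v) hbv]
      funext i; simp


/-- `Q(A,b)`: the convex hull of the nonnegative integer slack vectors `b - A x`, `x ∈ ℤⁿ`. -/
noncomputable def Qset {ι : Type*} [Fintype ι] {n : ℕ} (A : Matrix ι (Fin n) ℤ) (b : ι → ℤ) :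
    Set (ι → ℝ) :=
  convexHull ℝ
    {y | ∃ x : Fin n → ℤ, 0 ≤ b - A.mulVec x ∧ y = fun i => (((b - A.mulVec x) i : ℤ) : ℝ)}

theorem stmt3 {m n k : ℕ} (hm : m = n + k)
    (A : Matrix (Fin m) (Fin n) ℤ) (b : Fin m → ℤ)
    (hrank : (A.map (Int.cast : ℤ → ℝ)).rank = n)
    (hb : ∃ x : Fin n → ℝ, (A.map (Int.cast : ℤ → ℝ)).mulVec x = fun i => (b i : ℝ))
    (U : Matrix (Fin n) (Fin m) ℤ) (R : Matrix (Fin k) (Fin m) ℤ)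
    (hdet :
      ((Matrix.fromRows U R).submatrix id
          (((finCongr hm).trans finSumFinEquiv.symm).symm : Fin n ⊕ Fin k → Fin m)).det = 1 ∨
      ((Matrix.fromRows U R).submatrix id
          (((finCongr hm).trans finSumFinEquiv.symm).symm : Fin n ⊕ Fin k → Fin m)).det = -1)
    (hmul : Matrix.fromRows U R * A =
      Matrix.fromRows (1 : Matrix (Fin n) (Fin n) ℤ) (0 : Matrix (Fin k) (Fin n) ℤ)) :
    Qset A b = convexHull ℝ
      {y : Fin m → ℝ | ∃ yz : Fin m → ℤ,
        0 ≤ yz ∧ R.mulVec yz = 0 ∧ y = fun i => ((yz i : ℤ) : ℝ)} ∧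
    Qset A b =
      {y : Fin m → ℝ | 0 ≤ y ∧ (R.map (Int.cast : ℤ → ℝ)).mulVec y = 0} := by
  have hsets := slack_eq hm A b hb U R hdet hmul
  have h1 : Qset A b = convexHull ℝ
      {y : Fin m → ℝ | ∃ yz : Fin m → ℤ,
        0 ≤ yz ∧ R.mulVec yz = 0 ∧ y = fun i => ((yz i : ℤ) : ℝ)} := by
    unfold Qset
    rw [hsets]
  refine ⟨h1, h1.trans ?_⟩
  apply Set.eq_of_subset_of_subset
  · apply convexHull_min
    · rintro z ⟨v, hv0, hvR, rfl⟩
      refine ⟨?_, ?_⟩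
      · intro i
        simpa using (by exact_mod_cast hv0 i : (0:ℝ) ≤ (v i : ℝ))
      · funext j
        have h3 : ((R.mulVec v j : ℤ) : ℝ)
            = ((R.map (Int.cast : ℤ → ℝ)).mulVec (fun i => (v i : ℝ))) j :=
          RingHom.map_mulVec (Int.castRingHom ℝ) R v j
        rw [← h3, hvR]
        simp
    · rintro x ⟨hx0, hxR⟩ z ⟨hz0, hzR⟩ aa bb haa hbb hab
      refine ⟨?_, ?_⟩
      · intro i
        have h4 : (0:ℝ) ≤ x i := by simpa using hx0 i
        have h5 : (0:ℝ) ≤ z i := by simpa using hz0 i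
        simpa using add_nonneg (mul_nonneg haa h4) (mul_nonneg hbb h5)
      · rw [Matrix.mulVec_add, Matrix.mulVec_smul, Matrix.mulVec_smul, hxR, hzR,
          smul_zero, smul_zero, add_zero]
  · intro y hy
    exact key R y hy.1 hy.2
end

section
/- Let A ∈ ℤ^{m×n} with rank(A) = n such that the greatest common divisor of the absolute values of all n×n subdeterminants of A equals 1, and let b ∈ ℤ^m lie in the real column span of A. Then P(A,b) = conv(P(A,b) ∩ ℤ^n). -/
open Matrix

/-- `P(A,b) = {x ∈ ℝⁿ : A x ≤ b}`. -/
noncomputable def Pset {m n : ℕ} (A : Matrix (Fin m) (Fin n) ℤ) (b : Fin m → ℤ) :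
    Set (Fin n → ℝ) :=
  {x | (A.map (Int.cast : ℤ → ℝ)).mulVec x ≤ fun i => (b i : ℝ)}

/-- A real vector is integral if every entry is an integer. -/
def IsIntVec {n : ℕ} (x : Fin n → ℝ) : Prop := ∀ i, ∃ z : ℤ, x i = (z : ℝ)

def RatVec {k : ℕ} (x : Fin k → ℝ) : Prop := ∀ i, ∃ q : ℚ, x i = (q : ℝ)



lemma cube_lemma {k : ℕ} (s : Finset (Fin k)) :
    ∀ δ : ℝ, 0 < δ → ∀ x : Fin k → ℝ, (∀ i ∉ s, ∃ q : ℚ, x i = (q : ℝ)) →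
    x ∈ convexHull ℝ {y : Fin k → ℝ | RatVec y ∧ ∀ i, |y i - x i| ≤ δ} := by
  classical
  induction s using Finset.induction_on with
  | empty =>
    intro δ hδ x hx
    apply subset_convexHull
    refine ⟨fun i => hx i (by simp), fun i => by simp [le_of_lt hδ]⟩
  | @insert a s ha ih =>
    intro δ hδ x hx
    by_cases hxa : ∃ q : ℚ, x a = (q : ℝ)
    · have := ih δ hδ x (fun i hi => by
        by_cases h : i = a
        · subst h; exact hxa
        · exact hx i (by simp [h, hi]))
      exact this
    · obtain ⟨p, hp1, hp2⟩ := exists_rat_btwn (show x a - δ/2 < x a by linarith)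
      obtain ⟨q, hq1, hq2⟩ := exists_rat_btwn (show x a < x a + δ/2 by linarith)
      set x1 : Fin k → ℝ := Function.update x a (p : ℝ) with hx1def
      set x2 : Fin k → ℝ := Function.update x a (q : ℝ) with hx2def
      have hrat1 : ∀ i ∉ s, ∃ r : ℚ, x1 i = (r : ℝ) := by
        intro i hi
        by_cases h : i = a
        · subst h; exact ⟨p, by simp [hx1def]⟩
        · obtain ⟨r, hr⟩ := hx i (by simp [h, hi])
          exact ⟨r, by simp [hx1def, Function.update_of_ne h, hr]⟩
      have hrat2 : ∀ i ∉ s, ∃ r : ℚ, x2 i = (r : ℝ) := by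
        intro i hi
        by_cases h : i = a
        · subst h; exact ⟨q, by simp [hx2def]⟩
        · obtain ⟨r, hr⟩ := hx i (by simp [h, hi])
          exact ⟨r, by simp [hx2def, Function.update_of_ne h, hr]⟩
      have h1 := ih (δ/2) (by linarith) x1 hrat1
      have h2 := ih (δ/2) (by linarith) x2 hrat2
      have hsub1 : {y : Fin k → ℝ | RatVec y ∧ ∀ i, |y i - x1 i| ≤ δ/2} ⊆
          {y : Fin k → ℝ | RatVec y ∧ ∀ i, |y i - x i| ≤ δ} := by
        rintro y ⟨hy1, hy2⟩
        refine ⟨hy1, fun i => ?_⟩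
        have := hy2 i
        by_cases h : i = a
        · subst h
          have : |y i - (p:ℝ)| ≤ δ/2 := by simpa [hx1def] using hy2 i
          have h3 : |(p:ℝ) - x i| ≤ δ/2 := by
            rw [abs_le]; constructor <;> linarith
          calc |y i - x i| = |(y i - (p:ℝ)) + ((p:ℝ) - x i)| := by ring_nf
            _ ≤ |y i - (p:ℝ)| + |(p:ℝ) - x i| := abs_add_le _ _
            _ ≤ δ := by linarith
        · have : |y i - x i| ≤ δ/2 := by simpa [hx1def, Function.update_of_ne h] using hy2 i
          linarith
      have hsub2 : {y : Fin k → ℝ | RatVec y ∧ ∀ i, |y i - x2 i| ≤ δ/2} ⊆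
          {y : Fin k → ℝ | RatVec y ∧ ∀ i, |y i - x i| ≤ δ} := by
        rintro y ⟨hy1, hy2⟩
        refine ⟨hy1, fun i => ?_⟩
        by_cases h : i = a
        · subst h
          have : |y i - (q:ℝ)| ≤ δ/2 := by simpa [hx2def] using hy2 i
          have h3 : |(q:ℝ) - x i| ≤ δ/2 := by
            rw [abs_le]; constructor <;> linarith
          calc |y i - x i| = |(y i - (q:ℝ)) + ((q:ℝ) - x i)| := by ring_nf
            _ ≤ |y i - (q:ℝ)| + |(q:ℝ) - x i| := abs_add_le _ _
            _ ≤ δ := by linarith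
        · have : |y i - x i| ≤ δ/2 := by simpa [hx2def, Function.update_of_ne h] using hy2 i
          linarith
      have h1' := convexHull_mono hsub1 h1
      have h2' := convexHull_mono hsub2 h2
      -- x is a convex combination of x1 and x2
      have hx_seg : x ∈ segment ℝ x1 x2 := by
        set θ : ℝ := ((q:ℝ) - x a) / ((q:ℝ) - (p:ℝ)) with hθ
        have hpq : (p:ℝ) < (q:ℝ) := lt_trans hp2 hq1
        have hden : (0:ℝ) < (q:ℝ) - (p:ℝ) := by linarith
        refine ⟨θ, 1 - θ, ?_, ?_, by ring, ?_⟩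
        · exact div_nonneg (by linarith) (le_of_lt hden)
        · have : θ ≤ 1 := by
            rw [hθ, div_le_one hden]; linarith
          linarith
        · funext i
          by_cases h : i = a
          · subst h
            simp only [hx1def, hx2def, Function.update_self, Pi.add_apply, Pi.smul_apply,
              smul_eq_mul]
            rw [hθ, div_mul_eq_mul_div, one_sub_div hden.ne', div_mul_eq_mul_div, ← add_div,
              div_eq_iff hden.ne']
            ring
          · simp only [hx1def, hx2def, Function.update_of_ne h, Pi.add_apply, Pi.smul_apply,
              smul_eq_mul]
            ring
      have hconv : Convex ℝ (convexHull ℝ {y : Fin k → ℝ | RatVec y ∧ ∀ i, |y i - x i| ≤ δ}) :=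
        convex_convexHull _ _
      exact hconv.segment_subset h1' h2' hx_seg



lemma ratVec_sub {k : ℕ} {x y : Fin k → ℝ} (hx : RatVec x) (hy : RatVec y) :
    RatVec (x - y) := by
  intro i
  obtain ⟨p, hp⟩ := hx i; obtain ⟨q, hq⟩ := hy i
  exact ⟨p - q, by simp [hp, hq]⟩

lemma ratVec_smul {k : ℕ} {x : Fin k → ℝ} (q : ℚ) (hx : RatVec x) :
    RatVec ((q : ℝ) • x) := by
  intro i
  obtain ⟨p, hp⟩ := hx i
  exact ⟨q * p, by simp [hp]⟩

lemma ratMulVec {m n : ℕ} (A : Matrix (Fin m) (Fin n) ℤ) {u : Fin n → ℝ}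
    (hu : RatVec u) (i : Fin m) :
    ∃ q : ℚ, (A.map (Int.cast : ℤ → ℝ)).mulVec u i = (q : ℝ) := by
  choose q hq using hu
  refine ⟨∑ l, (A i l : ℚ) * q l, ?_⟩
  simp only [Matrix.mulVec, dotProduct, Matrix.map_apply]
  push_cast
  exact Finset.sum_congr rfl fun l _ => by rw [hq l]

lemma span_lemma {m n : ℕ} (A : Matrix (Fin m) (Fin n) ℤ) (s : Finset (Fin m)) :
    ∀ y : Fin n → ℝ, (∀ i ∈ s, (A.map (Int.cast : ℤ → ℝ)).mulVec y i = 0) →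
    y ∈ Submodule.span ℝ
      {u : Fin n → ℝ | RatVec u ∧ ∀ i ∈ s, (A.map (Int.cast : ℤ → ℝ)).mulVec u i = 0} := by
  classical
  set R := A.map (Int.cast : ℤ → ℝ) with hR
  induction s using Finset.induction_on with
  | empty =>
    intro y _
    have : y = ∑ i, y i • (Pi.single i (1:ℝ) : Fin n → ℝ) := by
      funext j
      simp [Pi.single_apply, Finset.sum_apply]
    rw [this]
    refine Submodule.sum_mem _ fun i _ => Submodule.smul_mem _ _ (Submodule.subset_span ?_)
    refine ⟨fun j => ⟨if j = i then 1 else 0, by split <;> simp [Pi.single_apply, *]⟩,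
      fun i hi => by simp at hi⟩
  | @insert a s ha ih =>
    intro y hy
    have hy_s : ∀ i ∈ s, R.mulVec y i = 0 := fun i hi => hy i (Finset.mem_insert_of_mem hi)
    have hya : R.mulVec y a = 0 := hy a (Finset.mem_insert_self a s)
    have := ih y hy_s
    rw [Submodule.mem_span_set'] at this
    obtain ⟨k, f, g, hsum⟩ := this
    set c : Fin k → ℝ := fun j => R.mulVec (g j : Fin n → ℝ) a with hc
    have hgrat : ∀ j, RatVec (g j : Fin n → ℝ) := fun j => (g j).2.1
    have hgker : ∀ j, ∀ i ∈ s, R.mulVec (g j : Fin n → ℝ) i = 0 := fun j => (g j).2.2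
    have hcrat : ∀ j, ∃ q : ℚ, c j = (q : ℝ) := fun j => ratMulVec A (hgrat j) a
    have hsumc : ∑ j, f j * c j = 0 := by
      have : R.mulVec y a = ∑ j, f j * c j := by
        rw [← hsum]
        rw [show R.mulVec (∑ j, f j • (g j : Fin n → ℝ)) = ∑ j, f j • R.mulVec (g j : Fin n → ℝ) by
          simp only [← Matrix.mulVecLin_apply, map_sum, _root_.map_smul]]
        simp [hc]
      rw [← this, hya]
    by_cases hcall : ∀ j, c j = 0
    · rw [← hsum]
      refine Submodule.sum_mem _ fun j _ => Submodule.smul_mem _ _ (Submodule.subset_span ?_)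
      refine ⟨hgrat j, fun i hi => ?_⟩
      rcases Finset.mem_insert.mp hi with h | h
      · subst h; exact hcall j
      · exact hgker j i h
    · push_neg at hcall
      obtain ⟨j₀, hj₀⟩ := hcall
      set u : Fin k → (Fin n → ℝ) :=
        fun j => (g j : Fin n → ℝ) - (c j / c j₀) • (g j₀ : Fin n → ℝ) with hu
      have humem : ∀ j, u j ∈
          {v : Fin n → ℝ | RatVec v ∧ ∀ i ∈ insert a s, R.mulVec v i = 0} := by
        intro j
        obtain ⟨qj, hqj⟩ := hcrat j
        obtain ⟨qj₀, hqj₀⟩ := hcrat j₀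
        constructor
        · have : c j / c j₀ = ((qj / qj₀ : ℚ) : ℝ) := by rw [hqj, hqj₀]; push_cast; ring
          rw [hu]
          have := ratVec_sub (hgrat j) (this ▸ ratVec_smul (qj/qj₀) (hgrat j₀))
          simpa [this] using this
        · intro i hi
          have hlin : R.mulVec (u j) i
              = R.mulVec (g j : Fin n → ℝ) i - (c j / c j₀) * R.mulVec (g j₀ : Fin n → ℝ) i := by
            simp [hu, Matrix.mulVec_sub, Matrix.mulVec_smul]
          rcases Finset.mem_insert.mp hi with h | h
          · subst h
            rw [hlin]
            field_simp
            simp only [hc]; ring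
          · rw [hlin, hgker j i h, hgker j₀ i h]; ring
      have hyu : y = ∑ j, f j • u j := by
        rw [hu]
        have : ∑ j, f j • ((g j : Fin n → ℝ) - (c j / c j₀) • (g j₀ : Fin n → ℝ))
            = (∑ j, f j • (g j : Fin n → ℝ)) - ((∑ j, f j * c j) / c j₀) • (g j₀ : Fin n → ℝ) := by
          simp only [smul_sub]
          rw [Finset.sum_sub_distrib]
          congr 1
          simp only [smul_smul]
          rw [← Finset.sum_smul]
          congr 1
          rw [Finset.sum_div]
          exact Finset.sum_congr rfl fun j _ => by field_simp
        rw [this, hsumc, hsum]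
        simp
      rw [hyu]
      exact Submodule.sum_mem _ fun j _ =>
        Submodule.smul_mem _ _ (Submodule.subset_span (humem j))





lemma ratVec_smul' {k : ℕ} {x : Fin k → ℝ} {c : ℝ} (q : ℚ) (hc : c = (q:ℝ)) (hx : RatVec x) :
    RatVec (c • x) := by
  intro i
  obtain ⟨p, hp⟩ := hx i
  exact ⟨q * p, by simp [hp, hc]⟩

lemma ratVec_sum {k n : ℕ} (t : Fin k → ℝ) (ht : ∀ j, ∃ q : ℚ, t j = (q:ℝ))
    (g : Fin k → (Fin n → ℝ)) (hg : ∀ j, RatVec (g j)) :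
    RatVec (∑ j, t j • g j) := by
  intro i
  choose q hq using ht
  choose r hr using fun j => hg j
  refine ⟨∑ j, q j * r j i, ?_⟩
  push_cast
  simp only [Finset.sum_apply, Pi.smul_apply, smul_eq_mul]
  exact Finset.sum_congr rfl fun j _ => by rw [hq j, hr j i]

lemma cone_rat {m n : ℕ} (A : Matrix (Fin m) (Fin n) ℤ) (y : Fin n → ℝ)
    (hy : (A.map (Int.cast : ℤ → ℝ)).mulVec y ≤ 0) :
    y ∈ convexHull ℝ
      {u : Fin n → ℝ | (A.map (Int.cast : ℤ → ℝ)).mulVec u ≤ 0 ∧ RatVec u} := by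
  classical
  set R := A.map (Int.cast : ℤ → ℝ) with hR
  set s : Finset (Fin m) := Finset.univ.filter (fun i => R.mulVec y i = 0) with hs
  have hzero : ∀ i ∈ s, R.mulVec y i = 0 := fun i hi => (Finset.mem_filter.mp hi).2
  have hstrict : ∀ i ∉ s, R.mulVec y i < 0 := by
    intro i hi
    rcases lt_or_eq_of_le (hy i) with h | h
    · exact h
    · exact absurd (Finset.mem_filter.mpr ⟨Finset.mem_univ i, h⟩) hi
  have hspan := span_lemma A s y hzero
  rw [Submodule.mem_span_set'] at hspan
  obtain ⟨k, f, g, hsum⟩ := hspan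
  set c : Fin m → Fin k → ℝ := fun i j => R.mulVec (g j : Fin n → ℝ) i with hc
  have hczero : ∀ i ∈ s, ∀ j, c i j = 0 := fun i hi j => (g j).2.2 i hi
  have hgrat : ∀ j, RatVec (g j : Fin n → ℝ) := fun j => (g j).2.1
  -- the linear map
  set φ : (Fin k → ℝ) → (Fin n → ℝ) := fun t => ∑ j, t j • (g j : Fin n → ℝ) with hφ
  have hφlin : IsLinearMap ℝ φ := by
    constructor
    · intro u v
      simp [hφ, add_smul, Finset.sum_add_distrib]
    · intro a u
      simp [hφ, Finset.smul_sum, smul_smul]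
  have hmv : ∀ t i, R.mulVec (φ t) i = ∑ j, t j * c i j := by
    intro t i
    simp only [hφ, ← Matrix.mulVecLin_apply, map_sum, _root_.map_smul]
    simp [hc, Matrix.mulVecLin_apply]
  -- choose δ
  set T : Finset (Fin m) := Finset.univ \ s with hT
  set ratio : Fin m → ℝ := fun i => (-(R.mulVec y i)) / (1 + ∑ j, |c i j|) with hratio
  have hden : ∀ i, (0:ℝ) < 1 + ∑ j, |c i j| := by
    intro i
    have : (0:ℝ) ≤ ∑ j, |c i j| := Finset.sum_nonneg fun j _ => abs_nonneg _
    linarith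
  set D : Finset ℝ := insert (1:ℝ) (T.image ratio) with hD
  have hDne : D.Nonempty := ⟨1, Finset.mem_insert_self _ _⟩
  set δ : ℝ := D.min' hDne with hδ
  have hδpos : 0 < δ := by
    rw [hδ, Finset.lt_min'_iff]
    intro b hb
    rcases Finset.mem_insert.mp hb with h | h
    · simp [h]
    · obtain ⟨i, hiT, rfl⟩ := Finset.mem_image.mp h
      have hi : i ∉ s := (Finset.mem_sdiff.mp hiT).2
      exact div_pos (by linarith [hstrict i hi]) (hden i)
  have hδle : ∀ i ∉ s, δ ≤ ratio i := by
    intro i hi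
    exact Finset.min'_le D _ (Finset.mem_insert_of_mem
      (Finset.mem_image_of_mem ratio (Finset.mem_sdiff.mpr ⟨Finset.mem_univ i, hi⟩)))
  -- apply cube lemma to f
  have hcube := cube_lemma (Finset.univ) δ hδpos f (fun i hi => absurd (Finset.mem_univ i) hi)
  have himg := hφlin.image_convexHull {t : Fin k → ℝ | RatVec t ∧ ∀ j, |t j - f j| ≤ δ}
  have hyin : y ∈ convexHull ℝ (φ '' {t : Fin k → ℝ | RatVec t ∧ ∀ j, |t j - f j| ≤ δ}) := by
    rw [← himg]
    exact ⟨f, hcube, hsum⟩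
  refine convexHull_mono ?_ hyin
  rintro - ⟨t, ⟨htrat, htclose⟩, rfl⟩
  constructor
  · -- constraints
    intro i
    rcases Classical.em (i ∈ s) with hi | hi
    · rw [hmv t i]
      simp only [Pi.zero_apply]
      rw [Finset.sum_eq_zero fun j _ => by rw [hczero i hi j, mul_zero]]
    · have key : R.mulVec (φ t) i = R.mulVec y i + ∑ j, (t j - f j) * c i j := by
        rw [hmv t i, ← hsum]
        have : R.mulVec (∑ j, f j • (g j : Fin n → ℝ)) i = ∑ j, f j * c i j := hmv f i
        rw [this]
        rw [← Finset.sum_add_distrib]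
        exact Finset.sum_congr rfl fun j _ => by ring
      have hbound : ∑ j, (t j - f j) * c i j ≤ δ * ∑ j, |c i j| := by
        rw [Finset.mul_sum]
        refine Finset.sum_le_sum fun j _ => ?_
        calc (t j - f j) * c i j ≤ |(t j - f j) * c i j| := le_abs_self _
          _ = |t j - f j| * |c i j| := abs_mul _ _
          _ ≤ δ * |c i j| := mul_le_mul_of_nonneg_right (htclose j) (abs_nonneg _)
      have hr : δ * (1 + ∑ j, |c i j|) ≤ -(R.mulVec y i) := by
        have h1 := hδle i hi
        have h2 := hden i
        calc δ * (1 + ∑ j, |c i j|) ≤ ratio i * (1 + ∑ j, |c i j|) :=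
              mul_le_mul_of_nonneg_right h1 (le_of_lt h2)
          _ = -(R.mulVec y i) := by rw [hratio]; field_simp
      have : δ * ∑ j, |c i j| ≤ -(R.mulVec y i) - δ := by nlinarith
      simp only [Pi.zero_apply]
      rw [key]
      linarith
  · exact ratVec_sum t htrat _ hgrat



lemma rat_to_int {m n : ℕ} (A : Matrix (Fin m) (Fin n) ℤ) (u : Fin n → ℝ)
    (hu : (A.map (Int.cast : ℤ → ℝ)).mulVec u ≤ 0) (hurat : RatVec u) :
    u ∈ convexHull ℝ
      {v : Fin n → ℝ | (A.map (Int.cast : ℤ → ℝ)).mulVec v ≤ 0 ∧ IsIntVec v} := by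
  classical
  set R := A.map (Int.cast : ℤ → ℝ) with hR
  choose q hq using hurat
  set N : ℕ := ∏ i, (q i).den with hN
  have hNpos : 0 < N := Finset.prod_pos fun i _ => (q i).pos
  set v : Fin n → ℝ := (N : ℝ) • u with hv
  have hvint : IsIntVec v := by
    intro i
    have hdvd : (q i).den ∣ N := Finset.dvd_prod_of_mem _ (Finset.mem_univ i)
    obtain ⟨t, ht⟩ := hdvd
    refine ⟨(t : ℤ) * (q i).num, ?_⟩
    have : ((N:ℚ)) * q i = (t : ℚ) * ((q i) * (q i).den) := by
      rw [ht]; push_cast; ring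
    rw [Rat.mul_den_eq_num] at this
    have : ((N:ℝ)) * (q i : ℝ) = ((t : ℤ) * (q i).num : ℤ) := by
      exact_mod_cast congrArg (fun x : ℚ => (x : ℝ)) this
    simpa [hv, hq i] using this
  have hvC : R.mulVec v ≤ 0 := by
    intro i
    have : R.mulVec v i = (N:ℝ) * R.mulVec u i := by
      simp [hv, Matrix.mulVec_smul]
    rw [this]
    have := hu i
    simp only [Pi.zero_apply] at this ⊢
    exact mul_nonpos_of_nonneg_of_nonpos (by positivity) this
  have h0 : (0 : Fin n → ℝ) ∈ {v : Fin n → ℝ | R.mulVec v ≤ 0 ∧ IsIntVec v} :=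
    ⟨by simp [Matrix.mulVec_zero], fun i => ⟨0, by simp⟩⟩
  have hvmem : v ∈ {v : Fin n → ℝ | R.mulVec v ≤ 0 ∧ IsIntVec v} := ⟨hvC, hvint⟩
  have hseg : u ∈ segment ℝ (0 : Fin n → ℝ) v := by
    refine ⟨1 - 1/(N:ℝ), 1/(N:ℝ), ?_, ?_, by ring, ?_⟩
    · have : (1:ℝ) ≤ N := by exact_mod_cast hNpos
      have : 1/(N:ℝ) ≤ 1 := by
        rw [div_le_one (by positivity)]; exact this
      linarith
    · positivity
    · rw [hv, smul_smul]
      have hNne : (N:ℝ) ≠ 0 := by positivity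
      rw [smul_zero, zero_add]
      rw [show 1/(N:ℝ) * (N:ℝ) = 1 by field_simp]
      simp
  exact (convex_convexHull ℝ _).segment_subset (subset_convexHull ℝ _ h0)
    (subset_convexHull ℝ _ hvmem) hseg

-- helper for Bezout step
lemma nat_gcd_step (x : ℝ) (p q : ℕ) (k1 k2 : ℤ) (h1 : (p:ℝ) * x = k1) (h2 : (q:ℝ) * x = k2) :
    ∃ k : ℤ, ((Nat.gcd p q : ℕ) : ℝ) * x = k := by
  refine ⟨Nat.gcdA p q * k1 + Nat.gcdB p q * k2, ?_⟩
  have hg := Nat.gcd_eq_gcd_ab p q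
  have hgr : ((Nat.gcd p q : ℕ) : ℝ) = (p:ℝ) * (Nat.gcdA p q : ℝ) + (q:ℝ) * (Nat.gcdB p q : ℝ) := by
    exact_mod_cast congrArg (fun z : ℤ => (z : ℝ)) hg
  rw [hgr]
  push_cast
  rw [add_mul]
  rw [show (p:ℝ) * (Nat.gcdA p q : ℝ) * x = (Nat.gcdA p q : ℝ) * ((p:ℝ) * x) by ring, h1]
  rw [show (q:ℝ) * (Nat.gcdB p q : ℝ) * x = (Nat.gcdB p q : ℝ) * ((q:ℝ) * x) by ring, h2]

-- L6a Bezout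
lemma gcd_bezout_real {ι : Type*} (s : Finset ι) (d : ι → ℤ) (x : ℝ)
    (h : ∀ a ∈ s, ∃ k : ℤ, (d a : ℝ) * x = k) :
    ∃ k : ℤ, ((s.gcd fun a => (d a).natAbs : ℕ) : ℝ) * x = k := by
  classical
  induction s using Finset.induction_on with
  | empty => exact ⟨0, by simp⟩
  | @insert a s ha ih =>
    obtain ⟨k₂, hk₂⟩ := ih (fun b hb => h b (Finset.mem_insert_of_mem hb))
    obtain ⟨k₁, hk₁⟩ := h a (Finset.mem_insert_self a s)
    rw [Finset.gcd_insert]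
    have habs : ∃ k : ℤ, (((d a).natAbs : ℕ) : ℝ) * x = k := by
      rcases Int.natAbs_eq (d a) with he | he
      · refine ⟨k₁, ?_⟩
        have h2 : (((d a).natAbs : ℕ) : ℝ) = ((d a : ℤ) : ℝ) := by
          rw [Nat.cast_natAbs]
          have hnn : (0:ℤ) ≤ d a := by rw [he]; exact Int.ofNat_nonneg _
          exact congrArg (Int.cast : ℤ → ℝ) (abs_of_nonneg hnn)
        rw [h2, hk₁]
      · refine ⟨-k₁, ?_⟩
        have : ((d a : ℝ)) = -(((d a).natAbs : ℕ) : ℝ) := by exact_mod_cast congrArg (fun z : ℤ => (z:ℝ)) he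
        rw [this] at hk₁
        push_cast at hk₁ ⊢
        linarith
    obtain ⟨k₁', hk₁'⟩ := habs
    have : GCDMonoid.gcd ((d a).natAbs) (s.gcd fun a => (d a).natAbs)
        = Nat.gcd ((d a).natAbs) (s.gcd fun a => (d a).natAbs) := rfl
    rw [this]
    exact nat_gcd_step x _ _ k₁' k₂ hk₁' hk₂



lemma int_solution {m n : ℕ} (A : Matrix (Fin m) (Fin n) ℤ) (b : Fin m → ℤ)
    (hgcd : (Finset.univ : Finset (Fin n → Fin m)).gcd
      (fun f => ((A.submatrix f id).det).natAbs) = 1)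
    (hb : ∃ x : Fin n → ℝ, (A.map (Int.cast : ℤ → ℝ)).mulVec x = fun i => (b i : ℝ)) :
    ∃ z : Fin n → ℤ,
      (A.map (Int.cast : ℤ → ℝ)).mulVec (fun i => (z i : ℝ)) = fun i => (b i : ℝ) := by
  classical
  obtain ⟨x₀, hx₀⟩ := hb
  set R := A.map (Int.cast : ℤ → ℝ) with hR
  have key : ∀ (f : Fin n → Fin m) (i : Fin n),
      ∃ k : ℤ, (((A.submatrix f id).det : ℤ) : ℝ) * x₀ i = k := by
    intro f i
    set Af := A.submatrix f id with hAf
    set Rf := (A.submatrix f id).map (Int.cast : ℤ → ℝ) with hRf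
    have hsub : R.submatrix f id = Rf := by
      rw [hR, hRf, Matrix.submatrix_map]
    have h1 : Rf.mulVec x₀ = fun j => (b (f j) : ℝ) := by
      funext j
      have := congrFun hx₀ (f j)
      simpa [← hsub, Matrix.mulVec, dotProduct, Matrix.submatrix_apply] using this
    have h2 : Rf.det • x₀ = (adjugate Rf).mulVec (fun j => (b (f j) : ℝ)) := by
      rw [← h1, Matrix.mulVec_mulVec, Matrix.adjugate_mul, Matrix.smul_mulVec,
        Matrix.one_mulVec]
    have hdet : Rf.det = ((Af.det : ℤ) : ℝ) := by
      have := RingHom.map_det (Int.castRingHom ℝ) Af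
      rw [RingHom.mapMatrix_apply] at this
      simp only [Int.coe_castRingHom] at this
      rw [hRf, ← hAf]
      exact this.symm
    have hadj : adjugate Rf = (adjugate Af).map (Int.cast : ℤ → ℝ) := by
      have := RingHom.map_adjugate (Int.castRingHom ℝ) Af
      rw [RingHom.mapMatrix_apply, RingHom.mapMatrix_apply] at this
      simp only [Int.coe_castRingHom] at this
      rw [hRf, ← hAf]
      exact this.symm
    refine ⟨∑ l, adjugate Af i l * b (f l), ?_⟩
    have := congrFun h2 i
    simp only [Pi.smul_apply, smul_eq_mul, hdet] at this
    rw [this, hadj]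
    simp only [Matrix.mulVec, dotProduct, Matrix.map_apply]
    push_cast
    rfl
  have : ∀ i, ∃ k : ℤ, x₀ i = k := by
    intro i
    obtain ⟨k, hk⟩ := gcd_bezout_real Finset.univ (fun f => (A.submatrix f id).det) (x₀ i)
      (fun f _ => key f i)
    rw [hgcd] at hk
    exact ⟨k, by simpa using hk⟩
  choose z hz using this
  refine ⟨z, ?_⟩
  have : (fun i => (z i : ℝ)) = x₀ := by funext i; rw [← hz i]
  rw [this]
  exact hx₀

theorem stmt4 {m n : ℕ} (A : Matrix (Fin m) (Fin n) ℤ) (b : Fin m → ℤ)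
    (hrank : (A.map (Int.cast : ℤ → ℝ)).rank = n)
    (hgcd : (Finset.univ : Finset (Fin n → Fin m)).gcd
      (fun f => ((A.submatrix f id).det).natAbs) = 1)
    (hb : ∃ x : Fin n → ℝ, (A.map (Int.cast : ℤ → ℝ)).mulVec x = fun i => (b i : ℝ)) :
    Pset A b = convexHull ℝ {x ∈ Pset A b | IsIntVec x} := by
  classical
  set R := A.map (Int.cast : ℤ → ℝ) with hR
  obtain ⟨z, hz⟩ := int_solution A b hgcd hb
  set zR : Fin n → ℝ := fun i => (z i : ℝ) with hzR
  apply Set.Subset.antisymm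
  · intro x hx
    have hyC : R.mulVec (x - zR) ≤ 0 := by
      intro i
      have h1 : R.mulVec (x - zR) i = R.mulVec x i - R.mulVec zR i := by
        rw [Matrix.mulVec_sub]
        simp
      have h2 : R.mulVec zR i = (b i : ℝ) := congrFun hz i
      have h3 := hx i
      simp only [Pi.zero_apply]
      rw [h1, h2]
      simpa using sub_nonpos.mpr h3
    have h4 := cone_rat A (x - zR) hyC
    have h5 : {u : Fin n → ℝ | R.mulVec u ≤ 0 ∧ RatVec u} ⊆
        convexHull ℝ {v : Fin n → ℝ | R.mulVec v ≤ 0 ∧ IsIntVec v} :=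
      fun u hu => rat_to_int A u hu.1 hu.2
    have h6 : x - zR ∈ convexHull ℝ {v : Fin n → ℝ | R.mulVec v ≤ 0 ∧ IsIntVec v} :=
      convexHull_min h5 (convex_convexHull ℝ _) h4
    set T : (Fin n → ℝ) →ᵃ[ℝ] (Fin n → ℝ) :=
      (AffineEquiv.constVAdd ℝ (Fin n → ℝ) zR).toAffineMap with hT
    have hTimg := T.image_convexHull {v : Fin n → ℝ | R.mulVec v ≤ 0 ∧ IsIntVec v}
    have hxmem : x ∈ convexHull ℝ
        (T '' {v : Fin n → ℝ | R.mulVec v ≤ 0 ∧ IsIntVec v}) := by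
      rw [← hTimg]
      refine ⟨x - zR, h6, ?_⟩
      simp [hT]
    refine convexHull_mono ?_ hxmem
    rintro - ⟨v, ⟨hv1, hv2⟩, rfl⟩
    constructor
    · intro i
      have h1 : R.mulVec (T v) i = R.mulVec zR i + R.mulVec v i := by
        have : T v = zR + v := by simp [hT]
        rw [this, Matrix.mulVec_add]
        simp
      rw [h1, congrFun hz i]
      have := hv1 i
      simp only [Pi.zero_apply] at this
      linarith
    · intro i
      obtain ⟨w, hw⟩ := hv2 i
      refine ⟨z i + w, ?_⟩
      have : T v = zR + v := by simp [hT]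
      rw [this]
      simp [hzR, hw]
  · apply convexHull_min
    · exact fun x hx => hx.1
    · intro x hx y hy a c ha hc hac
      intro i
      have h1 : R.mulVec (a • x + c • y) i = a * R.mulVec x i + c * R.mulVec y i := by
        rw [Matrix.mulVec_add]
        simp [Matrix.mulVec_smul]
      rw [h1]
      have h2 := hx i
      have h3 := hy i
      calc a * R.mulVec x i + c * R.mulVec y i
          ≤ a * (b i : ℝ) + c * (b i : ℝ) := by
            gcongr <;> assumption
        _ = (b i : ℝ) := by rw [← add_mul, hac, one_mul]
end

section
/- Let A ∈ ℤ^{m×n} be strictly Δ-modular with rank(A) = n, and let B be an n-element set of row indices of A such that the n×n row submatrix A_B satisfies |det A_B| = Δ. Then the matrix A · A_B^{−1} ∈ ℚ^{m×n} is totally unimodular. -/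
open Matrix

/-- A rational matrix is totally unimodular if every square submatrix has
determinant `0`, `1`, or `-1`. -/
def IsTU {ι κ : Type*} (M : Matrix ι κ ℚ) : Prop :=
  ∀ (k : ℕ) (f : Fin k → ι) (g : Fin k → κ),
    (M.submatrix f g).det = 0 ∨ (M.submatrix f g).det = 1 ∨ (M.submatrix f g).det = -1

theorem stmt7 {m n Δ : ℕ} (A : Matrix (Fin m) (Fin n) ℤ)
    (hrank : (A.map (Int.cast : ℤ → ℝ)).rank = n)
    (hstrict : ∀ f : Fin n → Fin m,
      (A.submatrix f id).det = 0 ∨ (A.submatrix f id).det = (Δ : ℤ) ∨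
        (A.submatrix f id).det = -(Δ : ℤ))
    (B : Fin n → Fin m) (hB : Function.Injective B)
    (hdetB : ((A.submatrix B id).det).natAbs = Δ) :
    IsTU ((A.map (Int.cast : ℤ → ℚ)) * ((A.submatrix B id).map (Int.cast : ℤ → ℚ))⁻¹) := by
  intro k f g
  set AB : Matrix (Fin n) (Fin n) ℚ := (A.submatrix B id).map (Int.cast : ℤ → ℚ) with hAB
  set M : Matrix (Fin m) (Fin n) ℚ := (A.map (Int.cast : ℤ → ℚ)) * AB⁻¹ with hM
  have hABdet : AB.det = ((A.submatrix B id).det : ℚ) := by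
    rw [hAB]
    exact (RingHom.map_det (Int.castRingHom ℚ) (A.submatrix B id)).symm
  rcases Nat.eq_zero_or_pos k with rfl | hk
  · right; left; exact Matrix.det_isEmpty
  by_cases hΔ : Δ = 0
  · left
    have h0 : AB⁻¹ = 0 := by
      apply Matrix.nonsing_inv_apply_not_isUnit
      rw [hABdet]
      have : (A.submatrix B id).det = 0 := by
        rw [← Int.natAbs_eq_zero, hdetB, hΔ]
      simp [this]
    have : M = 0 := by rw [hM, h0, Matrix.mul_zero]
    rw [this]
    simp only [Matrix.submatrix_zero]
    have : Nonempty (Fin k) := ⟨⟨0, hk⟩⟩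
    exact Matrix.det_zero
  -- Δ ≠ 0 case
  have hABd0 : (A.submatrix B id).det ≠ 0 := fun h => hΔ (by rw [← hdetB, h]; rfl)
  have hUnit : IsUnit AB.det := by
    rw [hABdet]
    exact isUnit_iff_ne_zero.mpr (by exact_mod_cast hABd0)
  have hid : M.submatrix B id = 1 := by
    have h1 : M.submatrix B id = AB * AB⁻¹ := by
      ext i j
      simp [hM, hAB, Matrix.mul_apply]
    rw [h1, Matrix.mul_nonsing_inv _ hUnit]
  by_cases hg : Function.Injective g
  · -- build the equiv
    classical
    set s : Finset (Fin n) := (Finset.univ.image g)ᶜ with hs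
    have hinj : Function.Injective (Sum.elim g (fun x : ↥s => x.val)) := by
      intro a b hab
      cases a with
      | inl i => cases b with
        | inl i' => exact congrArg Sum.inl (hg hab)
        | inr x =>
          simp only [Sum.elim_inl, Sum.elim_inr] at hab
          exact absurd (Finset.mem_image.mpr ⟨i, Finset.mem_univ i, hab⟩)
            (Finset.mem_compl.mp x.2)
      | inr x => cases b with
        | inl i' =>
          simp only [Sum.elim_inl, Sum.elim_inr] at hab
          exact absurd (Finset.mem_image.mpr ⟨i', Finset.mem_univ i', hab.symm⟩)
            (Finset.mem_compl.mp x.2)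
        | inr x' => exact congrArg Sum.inr (Subtype.ext hab)
    have hsurj : Function.Surjective (Sum.elim g (fun x : ↥s => x.val)) := by
      intro j
      by_cases hj : j ∈ Finset.univ.image g
      · obtain ⟨i, _, hi⟩ := Finset.mem_image.mp hj
        exact ⟨Sum.inl i, hi⟩
      · exact ⟨Sum.inr ⟨j, by rw [hs, Finset.mem_compl]; exact hj⟩, rfl⟩
    set e : (Fin k ⊕ ↥s) ≃ Fin n := Equiv.ofBijective _ ⟨hinj, hsurj⟩ with he
    have he_inl : ∀ i, e (Sum.inl i) = g i := fun i => rfl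
    have he_inr : ∀ x : ↥s, e (Sum.inr x) = (x : Fin n) := fun x => rfl
    have hsy_g : ∀ i, e.symm (g i) = Sum.inl i := fun i => by
      rw [← he_inl, Equiv.symm_apply_apply]
    have hsy_s : ∀ x : ↥s, e.symm (x : Fin n) = Sum.inr x := fun x => by
      rw [← he_inr, Equiv.symm_apply_apply]
    set h : Fin n → Fin m := (Sum.elim f (fun x : ↥s => B x.val)) ∘ e.symm with hh
    have hval_g : ∀ i, h (g i) = f i := fun i => by
      rw [hh, Function.comp_apply, hsy_g, Sum.elim_inl]
    have hval_s : ∀ x : ↥s, h (x : Fin n) = B x.val := fun x => by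
      rw [hh, Function.comp_apply, hsy_s, Sum.elim_inr]
    have hrow : ∀ (x : ↥s) j, M (B x.val) j = (1 : Matrix (Fin n) (Fin n) ℚ) x.val j := by
      intro x j
      rw [← hid]; rfl
    have hkey : (M.submatrix h id).submatrix e e =
        fromBlocks (M.submatrix f g) (Matrix.of fun i (x : ↥s) => M (f i) x.val) 0 1 := by
      ext a b
      cases a with
      | inl i => cases b with
        | inl i' =>
          show M (h (e (Sum.inl i))) (e (Sum.inl i')) = M (f i) (g i')
          rw [he_inl, he_inl, hval_g]
        | inr x =>
          show M (h (e (Sum.inl i))) (e (Sum.inr x)) = M (f i) (x : Fin n)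
          rw [he_inl, he_inr, hval_g]
      | inr x => cases b with
        | inl i' =>
          show M (h (e (Sum.inr x))) (e (Sum.inl i')) = 0
          rw [he_inr, he_inl, hval_s, hrow]
          apply Matrix.one_apply_ne
          intro hcon
          exact absurd (Finset.mem_image.mpr ⟨i', Finset.mem_univ i', hcon.symm⟩)
            (Finset.mem_compl.mp x.2)
        | inr x' =>
          show M (h (e (Sum.inr x))) (e (Sum.inr x')) = (1 : Matrix ↥s ↥s ℚ) x x'
          rw [he_inr, he_inr, hval_s, hrow]
          by_cases hxx : x = x'
          · subst hxx; rw [Matrix.one_apply_eq, Matrix.one_apply_eq]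
          · rw [Matrix.one_apply_ne (fun hc => hxx (Subtype.ext hc)),
              Matrix.one_apply_ne hxx]
    have hdet1 : (M.submatrix f g).det = (M.submatrix h id).det := by
      rw [← Matrix.det_submatrix_equiv_self e, hkey,
        Matrix.det_fromBlocks_zero₂₁, Matrix.det_one, mul_one]
    rw [hdet1]
    have hdet2 : (M.submatrix h id).det =
        ((A.submatrix h id).det : ℚ) * (AB.det)⁻¹ := by
      have hmm : M.submatrix h id = ((A.submatrix h id).map (Int.cast : ℤ → ℚ)) * AB⁻¹ := by
        ext i j
        simp [hM, Matrix.mul_apply]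
      rw [hmm, Matrix.det_mul, Matrix.det_nonsing_inv, Ring.inverse_eq_inv]
      congr 1
      exact (RingHom.map_det (Int.castRingHom ℚ) (A.submatrix h id)).symm
    rw [hdet2]
    have hABval : (A.submatrix B id).det = (Δ : ℤ) ∨ (A.submatrix B id).det = -(Δ : ℤ) := by
      rcases Int.natAbs_eq ((A.submatrix B id).det) with h1 | h1
      · left; rw [h1, hdetB]
      · right; rw [h1, hdetB]
    have hΔQ : (Δ : ℚ) ≠ 0 := Nat.cast_ne_zero.mpr hΔ
    rcases hstrict h with h1 | h1 | h1
    · left; rw [h1]; simp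
    · rcases hABval with h2 | h2
      · right; left
        rw [h1, hABdet, h2]
        push_cast
        field_simp
      · right; right
        rw [h1, hABdet, h2]
        push_cast
        field_simp
    · rcases hABval with h2 | h2
      · right; right
        rw [h1, hABdet, h2]
        push_cast
        field_simp
      · right; left
        rw [h1, hABdet, h2]
        push_cast
        field_simp
  · -- g not injective
    left
    rw [Function.not_injective_iff] at hg
    obtain ⟨i, j, hij, hne⟩ := hg
    exact Matrix.det_zero_of_column_eq hne (fun r => by simp [Matrix.submatrix_apply, hij])
end

section
/- Let A ∈ ℤ^{m×n} be strictly Δ-modular with rank(A) = n, with rows partitioned into an n-element set B satisfying |det A_B| = Δ and its complement N, and let b ∈ ℤ^m lie in the real column span of A. Then Q(A,b) = conv{ y ∈ ℤ^m : y ≥ 0, y_N = A_N A_B^{−1} y_B, and y_B − b_B ∈ A_B ℤ^n }, where y_B, y_N, b_B denote the corresponding subvectors and A_B, A_N the corresponding row submatrices. -/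
open Matrix

lemma exists_nonzero_minor {n k : ℕ} (A : Matrix (Fin n ⊕ Fin k) (Fin n) ℤ)
    (hrank : (A.map (Int.cast : ℤ → ℝ)).rank = n) :
    ∃ f : Fin n → Fin n ⊕ Fin k, (A.submatrix f id).det ≠ 0 := by
  classical
  set Ar := A.map (Int.cast : ℤ → ℝ) with hAr
  have hspanr : Submodule.span ℝ (Set.range Ar) = ⊤ := by
    apply Submodule.eq_top_of_finrank_eq
    erw [← Matrix.rank_eq_finrank_span_row (A := Ar), hrank]
    simp [Module.finrank_pi]
  obtain ⟨s, hsub, hspan, hli⟩ := exists_linearIndependent ℝ (Set.range Ar)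
  rw [hspanr] at hspan
  have hfin : s.Finite := (Set.finite_range Ar).subset hsub
  haveI : Fintype s := hfin.fintype
  have hb : Nonempty (Module.Basis s ℝ (Fin n → ℝ)) := ⟨Module.Basis.mk hli (by rw [Subtype.range_coe, hspan])⟩
  obtain ⟨bas⟩ := hb
  have hcard : Fintype.card s = n := by
    have := Module.finrank_eq_card_basis bas
    simpa [Module.finrank_pi] using this.symm
  obtain ⟨e⟩ : Nonempty (Fin n ≃ s) := ⟨(Fintype.equivFinOfCardEq hcard).symm⟩
  have hpre : ∀ j : Fin n, ∃ i, Ar i = (e j : Fin n → ℝ) := fun j => hsub (e j).2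
  choose f hf using hpre
  refine ⟨f, ?_⟩
  have hM : ((A.submatrix f id).map (Int.cast : ℤ → ℝ)) = fun j => (e j : Fin n → ℝ) := by
    funext j c
    rw [← hf j]
    rfl
  have hliM : LinearIndependent ℝ (fun j => ((A.submatrix f id).map (Int.cast : ℤ → ℝ)) j) := by
    rw [hM]
    exact hli.comp _ e.injective
  have hunit := Matrix.linearIndependent_rows_iff_isUnit.mp hliM
  have hdet : ((A.submatrix f id).map (Int.cast : ℤ → ℝ)).det ≠ 0 :=
    isUnit_iff_ne_zero.mp ((Matrix.isUnit_iff_isUnit_det _).mp hunit)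
  intro h
  apply hdet
  have : ((A.submatrix f id).map (Int.cast : ℤ → ℝ)).det = ((A.submatrix f id).det : ℝ) :=
    (RingHom.map_det (Int.castRingHom ℝ) _).symm
  rw [this, h, Int.cast_zero]

/-- Rows are partitioned into the `n`-element set `B` (indexed by `Sum.inl`) and its
complement `N` (indexed by `Sum.inr`). -/
theorem stmt8 {n k Δ : ℕ} (A : Matrix (Fin n ⊕ Fin k) (Fin n) ℤ) (b : Fin n ⊕ Fin k → ℤ)
    (hrank : (A.map (Int.cast : ℤ → ℝ)).rank = n)
    (hstrict : ∀ f : Fin n → Fin n ⊕ Fin k,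
      (A.submatrix f id).det = 0 ∨ (A.submatrix f id).det = (Δ : ℤ) ∨
        (A.submatrix f id).det = -(Δ : ℤ))
    (hdetB : ((A.submatrix Sum.inl id).det).natAbs = Δ)
    (hb : ∃ x : Fin n → ℝ, (A.map (Int.cast : ℤ → ℝ)).mulVec x = fun i => (b i : ℝ)) :
    Qset A b = convexHull ℝ
      {y : Fin n ⊕ Fin k → ℝ | ∃ yz : Fin n ⊕ Fin k → ℤ,
        0 ≤ yz ∧
        (fun j => ((yz (Sum.inr j) : ℤ) : ℚ)) =
          ((A.submatrix Sum.inr id).map (Int.cast : ℤ → ℚ) *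
            ((A.submatrix Sum.inl id).map (Int.cast : ℤ → ℚ))⁻¹).mulVec
              (fun i => ((yz (Sum.inl i) : ℤ) : ℚ)) ∧
        (∃ z : Fin n → ℤ,
          (fun i => yz (Sum.inl i) - b (Sum.inl i)) = (A.submatrix Sum.inl id).mulVec z) ∧
        y = fun i => ((yz i : ℤ) : ℝ)} := by
  classical
  set AB := A.submatrix Sum.inl id with hABdef
  set AN := A.submatrix Sum.inr id with hANdef
  set ABQ := AB.map (Int.cast : ℤ → ℚ) with hABQdef
  set ANQ := AN.map (Int.cast : ℤ → ℚ) with hANQdef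
  -- Δ ≠ 0 and det AB ≠ 0
  have hΔ : (Δ : ℤ) ≠ 0 := by
    obtain ⟨f, hf⟩ := exists_nonzero_minor A hrank
    rcases hstrict f with h | h | h
    · exact absurd h hf
    · intro h0; rw [h0] at h; exact hf h
    · intro h0; rw [h0, neg_zero] at h; exact hf h
  have hdet0 : AB.det ≠ 0 := by
    intro h
    apply hΔ
    rw [← hdetB, h]
    simp
  have hdetQ : IsUnit ABQ.det := by
    rw [show ABQ.det = ((AB.det : ℤ) : ℚ) from (RingHom.map_det (Int.castRingHom ℚ) _).symm]
    exact isUnit_iff_ne_zero.mpr (by exact_mod_cast hdet0)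
  set P := ANQ * ABQ⁻¹ with hPdef
  have hPB : P * ABQ = ANQ := by
    rw [hPdef, Matrix.mul_assoc, Matrix.nonsing_inv_mul _ hdetQ, Matrix.mul_one]
  have hkey : ∀ v : Fin n → ℚ, P.mulVec (ABQ.mulVec v) = ANQ.mulVec v := by
    intro v
    rw [Matrix.mulVec_mulVec, hPB]
  -- entrywise cast lemmas
  have hcastB : ∀ (v : Fin n → ℤ) (i : Fin n),
      ((AB.mulVec v i : ℤ) : ℚ) = ABQ.mulVec (fun i => ((v i : ℤ) : ℚ)) i := by
    intro v i
    simp [Matrix.mulVec, dotProduct, hABQdef, Matrix.map_apply]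
  have hcastN : ∀ (v : Fin n → ℤ) (j : Fin k),
      ((AN.mulVec v j : ℤ) : ℚ) = ANQ.mulVec (fun i => ((v i : ℤ) : ℚ)) j := by
    intro v j
    simp [Matrix.mulVec, dotProduct, hANQdef, Matrix.map_apply]
  -- the key rational relation for b
  have hbQ : (fun j => ((b (Sum.inr j) : ℤ) : ℚ)) =
      P.mulVec (fun i => ((b (Sum.inl i) : ℤ) : ℚ)) := by
    obtain ⟨x₀, hx₀⟩ := hb
    set ABR := AB.map (Int.cast : ℤ → ℝ) with hABRdef
    set ANR := AN.map (Int.cast : ℤ → ℝ) with hANRdef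
    have hdetR : IsUnit ABR.det := by
      rw [show ABR.det = ((AB.det : ℤ) : ℝ) from (RingHom.map_det (Int.castRingHom ℝ) _).symm]
      exact isUnit_iff_ne_zero.mpr (by exact_mod_cast hdet0)
    set w := ABQ⁻¹.mulVec (fun i => ((b (Sum.inl i) : ℤ) : ℚ)) with hwdef
    have hw : ABQ.mulVec w = fun i => ((b (Sum.inl i) : ℤ) : ℚ) := by
      rw [hwdef, Matrix.mulVec_mulVec, Matrix.mul_nonsing_inv _ hdetQ, Matrix.one_mulVec]
    have hcastBR : ∀ (v : Fin n → ℚ) (i : Fin n),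
        ABR.mulVec (fun i => ((v i : ℚ) : ℝ)) i = (((ABQ.mulVec v) i : ℚ) : ℝ) := by
      intro v i
      simp [Matrix.mulVec, dotProduct, hABRdef, hABQdef, Matrix.map_apply]
    have hcastNR : ∀ (v : Fin n → ℚ) (j : Fin k),
        ANR.mulVec (fun i => ((v i : ℚ) : ℝ)) j = (((ANQ.mulVec v) j : ℚ) : ℝ) := by
      intro v j
      simp [Matrix.mulVec, dotProduct, hANRdef, hANQdef, Matrix.map_apply]
    have hx₀B : ABR.mulVec x₀ = fun i => ((b (Sum.inl i) : ℤ) : ℝ) := by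
      funext i
      exact congrFun hx₀ (Sum.inl i)
    have hx₀N : ANR.mulVec x₀ = fun j => ((b (Sum.inr j) : ℤ) : ℝ) := by
      funext j
      exact congrFun hx₀ (Sum.inr j)
    have hwR : ABR.mulVec (fun i => ((w i : ℚ) : ℝ)) = fun i => ((b (Sum.inl i) : ℤ) : ℝ) := by
      funext i
      rw [hcastBR, hw]
      push_cast
      rfl
    have hinj : Function.Injective ABR.mulVec :=
      Matrix.mulVec_injective_iff_isUnit.mpr ((Matrix.isUnit_iff_isUnit_det _).mpr hdetR)
    have hx₀w : x₀ = fun i => ((w i : ℚ) : ℝ) := hinj (hx₀B.trans hwR.symm)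
    funext j
    have h1 : (((ANQ.mulVec w) j : ℚ) : ℝ) = (((b (Sum.inr j) : ℤ) : ℚ) : ℝ) := by
      rw [← hcastNR, ← hx₀w, hx₀N]
      push_cast
      rfl
    have h2 : (ANQ.mulVec w) j = ((b (Sum.inr j) : ℤ) : ℚ) := Rat.cast_injective h1
    rw [← h2, hwdef, ← Matrix.mulVec_mulVec]
  -- the two underlying sets are equal
  rw [Qset]
  congr 1
  ext y
  simp only [Set.mem_setOf_eq]
  constructor
  · rintro ⟨x, hx0, rfl⟩
    refine ⟨b - A.mulVec x, hx0, ?_, ⟨-x, ?_⟩, rfl⟩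
    · funext j
      have hL : (((b - A.mulVec x) (Sum.inr j) : ℤ) : ℚ) =
          ((b (Sum.inr j) : ℤ) : ℚ) - (ANQ.mulVec (fun i => ((x i : ℤ) : ℚ))) j := by
        have e1 : (b - A.mulVec x) (Sum.inr j) = b (Sum.inr j) - (AN.mulVec x) j := rfl
        rw [e1, ← hcastN]
        push_cast
        ring
      have hR : (fun i => (((b - A.mulVec x) (Sum.inl i) : ℤ) : ℚ)) =
          (fun i => ((b (Sum.inl i) : ℤ) : ℚ)) - ABQ.mulVec (fun i => ((x i : ℤ) : ℚ)) := by
        funext i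
        simp only [Pi.sub_apply]
        rw [show (A.mulVec x) (Sum.inl i) = (AB.mulVec x) i from rfl, ← hcastB]
        push_cast
        ring
      rw [hL, hR, Matrix.mulVec_sub, ← hbQ, hkey]
      rfl
    · funext i
      show b (Sum.inl i) - (A.mulVec x) (Sum.inl i) - b (Sum.inl i) = (AB.mulVec (-x)) i
      have h1 : (A.mulVec x) (Sum.inl i) = (AB.mulVec x) i := rfl
      rw [h1, Matrix.mulVec_neg, Pi.neg_apply]
      ring
  · rintro ⟨yz, hyz0, hQ, ⟨z, hz⟩, rfl⟩
    have heq : b - A.mulVec (-z) = yz := by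
      funext i
      cases i with
      | inl i =>
        have h1 := congrFun hz i
        show b (Sum.inl i) - (A.mulVec (-z)) (Sum.inl i) = yz (Sum.inl i)
        have h2 : (A.mulVec (-z)) (Sum.inl i) = (AB.mulVec (-z)) i := rfl
        rw [h2, Matrix.mulVec_neg, Pi.neg_apply]
        omega
      | inr j =>
        show b (Sum.inr j) - (A.mulVec (-z)) (Sum.inr j) = yz (Sum.inr j)
        have h2 : (A.mulVec (-z)) (Sum.inr j) = (AN.mulVec (-z)) j := rfl
        rw [h2, Matrix.mulVec_neg, Pi.neg_apply, sub_neg_eq_add]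
        apply @Int.cast_injective ℚ
        have hBQ : (fun i => ((yz (Sum.inl i) : ℤ) : ℚ)) =
            (fun i => ((b (Sum.inl i) : ℤ) : ℚ)) + ABQ.mulVec (fun i => ((z i : ℤ) : ℚ)) := by
          funext i
          have h3 := congrFun hz i
          have h5 : yz (Sum.inl i) = b (Sum.inl i) + (AB.mulVec z) i := by omega
          rw [Pi.add_apply, ← hcastB, h5]
          push_cast
          ring
        have h4 := congrFun hQ j
        rw [h4, hBQ, Matrix.mulVec_add, hkey, ← hbQ]
        push_cast
        rw [hcastN]
        rfl
    exact ⟨-z, by rw [heq]; intro i; exact_mod_cast hyz0 i, by rw [heq]⟩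
end
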